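/- (Minty's Lemma) For a subspace V of R^n and nonempty intervals I_1, …, I_n ⊆ R with product set I = I_1 × ⋯ × I_n, exactly one of the following holds: either there exists x ∈ V ∩ I, or there exists a vector v in the orthogonal complement V^⊥ such that vᵀz > 0 for all z ∈ I. -/

import Mathlib

open Finset Set

private lemma dot_smul {n : ℕ} (r : ℝ) (c x : Fin n → ℝ) :
    ∑ i, (r • c) i * x i = r * ∑ i, c i * x i := by
  rw [Finset.mul_sum]; exact Finset.sum_congr rfl fun i _ => by simp [mul_assoc]

private lemma dot_neg {n : ℕ} (c x : Fin n → ℝ) :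
    ∑ i, (-c) i * x i = -∑ i, c i * x i := by
  rw [← Finset.sum_neg_distrib]; exact Finset.sum_congr rfl fun i _ => by simp

private lemma sep_box {n : ℕ} (W : Submodule ℝ (Fin n → ℝ)) (a : Fin n → ℝ)
    (l u : Fin n → ℝ) (hlu : ∀ i, l i ≤ u i)
    (hdisj : ∀ x : Fin n → ℝ, x - a ∈ W → ¬ ∀ i, x i ∈ Set.Icc (l i) (u i)) :
    ∃ v : Fin n → ℝ, ‖v‖ = 1 ∧ (∀ w ∈ W, ∑ i, v i * w i = 0) ∧
      ∀ z : Fin n → ℝ, (∀ i, z i ∈ Set.Icc (l i) (u i)) →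
        ∑ i, v i * a i ≤ ∑ i, v i * z i := by
  classical
  set B : Set (Fin n → ℝ) := Set.univ.pi fun i => Set.Icc (l i) (u i) with hB
  set A : Set (Fin n → ℝ) := {x | x - a ∈ W} with hA
  have hmemB : ∀ x : Fin n → ℝ, x ∈ B ↔ ∀ i, x i ∈ Set.Icc (l i) (u i) := by
    intro x; rw [hB, Set.mem_pi]; exact ⟨fun h i => h i (Set.mem_univ i), fun h i _ => h i⟩
  have hBc : Convex ℝ B := convex_pi fun i _ => convex_Icc _ _
  have hBk : IsCompact B := isCompact_univ_pi fun i => isCompact_Icc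
  have hAc : Convex ℝ A := by
    intro x hx y hy s t hs ht hst
    have heq : s • x + t • y - a = s • (x - a) + t • (y - a) := by
      have h2 : s • (x - a) + t • (y - a) = s • x + t • y - (s + t) • a := by
        rw [smul_sub, smul_sub, add_smul]; abel
      rw [h2, hst, one_smul]
    show s • x + t • y - a ∈ W
    rw [heq]
    exact W.add_mem (W.smul_mem _ hx) (W.smul_mem _ hy)
  have hAcl : IsClosed A := by
    have : A = (fun x => x - a) ⁻¹' (W : Set (Fin n → ℝ)) := rfl
    rw [this]
    exact (Submodule.closed_of_finiteDimensional W).preimage (continuous_id.sub continuous_const)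
  have hdisj' : Disjoint B A := by
    rw [Set.disjoint_left]
    intro z hz hzA
    exact hdisj z hzA ((hmemB z).1 hz)
  obtain ⟨f, u', v', h1, h2, h3⟩ :=
    geometric_hahn_banach_compact_closed hBc hBk hAc hAcl hdisj'
  have haA : a ∈ A := by show a - a ∈ W; rw [sub_self]; exact W.zero_mem
  have hfW : ∀ w ∈ W, f w = 0 := by
    intro w hw
    by_contra hfw
    have hmem : a + ((v' - f a) / f w) • w ∈ A := by
      show a + ((v' - f a) / f w) • w - a ∈ W
      rw [add_sub_cancel_left]
      exact W.smul_mem _ hw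
    have := h3 _ hmem
    rw [map_add, map_smul, smul_eq_mul, div_mul_cancel₀ _ hfw] at this
    linarith
  have key : ∀ z ∈ B, f z < f a := fun z hz => lt_trans (lt_trans (h1 z hz) h2) (h3 a haA)
  set c : Fin n → ℝ := fun i => f (Pi.single i (1:ℝ)) with hc
  have hfx : ∀ x : Fin n → ℝ, f x = ∑ i, c i * x i := by
    intro x
    have hxe : x = ∑ i, x i • (Pi.single i (1:ℝ) : Fin n → ℝ) := by
      funext j
      simp [Pi.single_apply, Finset.sum_apply, Finset.sum_ite_eq, mul_ite]
    conv_lhs => rw [hxe]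
    rw [map_sum]
    exact Finset.sum_congr rfl fun i _ => by rw [map_smul, smul_eq_mul, mul_comm]
  have hlB : l ∈ B := (hmemB l).2 fun i => ⟨le_refl _, hlu i⟩
  have hcne : c ≠ 0 := by
    intro h0
    have e1 : f l = 0 := by rw [hfx]; simp [h0]
    have e2 : f a = 0 := by rw [hfx]; simp [h0]
    have := key l hlB
    rw [e1, e2] at this
    exact lt_irrefl _ this
  have hnc : ‖c‖ ≠ 0 := norm_ne_zero_iff.2 hcne
  have hncpos : (0:ℝ) < ‖c‖⁻¹ := inv_pos.2 (lt_of_le_of_ne (norm_nonneg c) (Ne.symm hnc))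
  refine ⟨‖c‖⁻¹ • (-c), ?_, ?_, ?_⟩
  · rw [norm_smul, norm_neg, norm_inv, norm_norm]
    exact inv_mul_cancel₀ hnc
  · intro w hw
    rw [dot_smul, dot_neg, ← hfx w, hfW w hw]
    ring
  · intro z hz
    have hzB : z ∈ B := (hmemB z).2 hz
    have hlt : f z < f a := key z hzB
    rw [hfx, hfx] at hlt
    rw [dot_smul, dot_neg, dot_smul, dot_neg, ← hfx, ← hfx]
    nlinarith [key z hzB]

private lemma mem_of_min {s : Set ℝ} {x y : ℝ} (hx : x ∈ s) (hy : y ∈ s) : min x y ∈ s := by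
  rcases min_choice x y with h | h <;> rw [h] <;> assumption

private lemma mem_of_max {s : Set ℝ} {x y : ℝ} (hx : x ∈ s) (hy : y ∈ s) : max x y ∈ s := by
  rcases max_choice x y with h | h <;> rw [h] <;> assumption

private lemma weak_cert {n : ℕ} (W : Submodule ℝ (Fin n → ℝ)) (a : Fin n → ℝ)
    (I : Fin n → Set ℝ) (hne : ∀ i, (I i).Nonempty) (hconn : ∀ i, (I i).OrdConnected)
    (hdisj : ¬ ∃ x : Fin n → ℝ, (x - a ∈ W ∧ ∀ i, x i ∈ I i)) :
    ∃ v : Fin n → ℝ, ‖v‖ = 1 ∧ (∀ w ∈ W, ∑ i, v i * w i = 0) ∧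
      ∀ z : Fin n → ℝ, (∀ i, z i ∈ I i) → ∑ i, v i * a i ≤ ∑ i, v i * z i := by
  classical
  set ι : Type _ := {p : (Fin n → ℝ) × (Fin n → ℝ) // (∀ i, p.1 i ∈ I i) ∧ (∀ i, p.2 i ∈ I i)}
    with hι
  have : Nonempty ι := ⟨⟨(fun i => (hne i).some, fun i => (hne i).some),
    fun i => (hne i).some_mem, fun i => (hne i).some_mem⟩⟩
  set K : ι → Set (Fin n → ℝ) := fun p =>
    {v | ‖v‖ = 1 ∧ (∀ w ∈ W, ∑ i, v i * w i = 0) ∧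
      ∀ z : Fin n → ℝ,
        (∀ i, z i ∈ Set.Icc (min (p.1.1 i) (p.1.2 i)) (max (p.1.1 i) (p.1.2 i))) →
          ∑ i, v i * a i ≤ ∑ i, v i * z i} with hK
  have hKne : ∀ p, (K p).Nonempty := by
    rintro ⟨⟨p1, p2⟩, hp1, hp2⟩
    obtain ⟨v, h1, h2, h3⟩ := sep_box W a (fun i => min (p1 i) (p2 i)) (fun i => max (p1 i) (p2 i))
      (fun i => min_le_max)
      (by
        intro x hxW hxI
        exact hdisj ⟨x, hxW, fun i => (hconn i).out (mem_of_min (hp1 i) (hp2 i))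
          (mem_of_max (hp1 i) (hp2 i)) (hxI i)⟩)
    exact ⟨v, h1, h2, h3⟩
  have hcont : ∀ x : Fin n → ℝ, Continuous (fun v : Fin n → ℝ => ∑ i, v i * x i) :=
    fun x => continuous_finset_sum _ fun i _ => (continuous_apply i).mul continuous_const
  have hKcl : ∀ p, IsClosed (K p) := by
    intro p
    have e : K p = {v : Fin n → ℝ | ‖v‖ = 1} ∩
        ((⋂ w ∈ (W : Set (Fin n → ℝ)), {v | ∑ i, v i * w i = 0}) ∩
         (⋂ z ∈ {z : Fin n → ℝ | ∀ i,
            z i ∈ Set.Icc (min (p.1.1 i) (p.1.2 i)) (max (p.1.1 i) (p.1.2 i))},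
            {v | ∑ i, v i * a i ≤ ∑ i, v i * z i})) := by
      ext v
      simp only [hK, Set.mem_setOf_eq, Set.mem_inter_iff, Set.mem_iInter]
      tauto
    rw [e]
    refine (isClosed_eq continuous_norm continuous_const).inter (IsClosed.inter ?_ ?_)
    · exact isClosed_biInter fun w _ => isClosed_eq (hcont w) continuous_const
    · exact isClosed_biInter fun z _ => isClosed_le (hcont a) (hcont z)
  have hKcomp : ∀ p, IsCompact (K p) := by
    intro p
    refine (isCompact_sphere (0 : Fin n → ℝ) 1).of_isClosed_subset (hKcl p) ?_
    intro v hv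
    rw [mem_sphere_zero_iff_norm]
    exact hv.1
  have hdir : Directed (fun (x1 x2 : Set (Fin n → ℝ)) => x1 ⊇ x2) K := by
    rintro ⟨⟨p1, p2⟩, hp1, hp2⟩ ⟨⟨q1, q2⟩, hq1, hq2⟩
    refine ⟨⟨(fun i => min (min (p1 i) (p2 i)) (min (q1 i) (q2 i)),
             fun i => max (max (p1 i) (p2 i)) (max (q1 i) (q2 i))),
             fun i => mem_of_min (mem_of_min (hp1 i) (hp2 i)) (mem_of_min (hq1 i) (hq2 i)),
             fun i => mem_of_max (mem_of_max (hp1 i) (hp2 i)) (mem_of_max (hq1 i) (hq2 i))⟩,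
           ?_, ?_⟩
    · rintro v ⟨h1, h2, h3⟩
      refine ⟨h1, h2, fun z hz => h3 z fun i => ?_⟩
      exact ⟨le_trans (min_le_left _ _) (le_trans (min_le_left _ _) (hz i).1),
        le_trans (hz i).2 (le_trans (le_max_left _ _) (le_max_right _ _))⟩
    · rintro v ⟨h1, h2, h3⟩
      refine ⟨h1, h2, fun z hz => h3 z fun i => ?_⟩
      exact ⟨le_trans (min_le_left _ _) (le_trans (min_le_right _ _) (hz i).1),
        le_trans (hz i).2 (le_trans (le_max_right _ _) (le_max_right _ _))⟩
  obtain ⟨v, hv⟩ := IsCompact.nonempty_iInter_of_directed_nonempty_isCompact_isClosed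
    K hdir hKne hKcomp hKcl
  rw [Set.mem_iInter] at hv
  have hvfix := hv ⟨((fun i => (hne i).some), (fun i => (hne i).some)),
    fun i => (hne i).some_mem, fun i => (hne i).some_mem⟩
  refine ⟨v, hvfix.1, hvfix.2.1, ?_⟩
  intro z hz
  have := (hv ⟨(z, z), hz, hz⟩).2.2 z (fun i => ?_)
  · exact this
  · simp
private lemma elim_coord {n : ℕ}
    (ih : ∀ (W : Submodule ℝ (Fin n → ℝ)) (a : Fin n → ℝ) (I : Fin n → Set ℝ),
      (∀ i, (I i).Nonempty) → (∀ i, (I i).OrdConnected) →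
      (∃ x : Fin n → ℝ, x - a ∈ W ∧ ∀ i, x i ∈ I i) ∨
      (∃ v : Fin n → ℝ, (∀ w ∈ W, ∑ i, v i * w i = 0) ∧
        ∀ z : Fin n → ℝ, (∀ i, z i ∈ I i) → ∑ i, v i * a i < ∑ i, v i * z i))
    (W : Submodule ℝ (Fin (n+1) → ℝ)) (a : Fin (n+1) → ℝ) (J : Fin (n+1) → Set ℝ)
    (hne : ∀ i, (J i).Nonempty) (hconn : ∀ i, (J i).OrdConnected)
    (i0 : Fin (n+1)) (c : ℝ) (hJ0 : J i0 = {c}) :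
    (∃ x : Fin (n+1) → ℝ, x - a ∈ W ∧ ∀ i, x i ∈ J i) ∨
    (∃ v : Fin (n+1) → ℝ, (∀ w ∈ W, ∑ i, v i * w i = 0) ∧
      ∀ z : Fin (n+1) → ℝ, (∀ i, z i ∈ J i) → ∑ i, v i * a i < ∑ i, v i * z i) := by
  classical
  set π : (Fin (n+1) → ℝ) →ₗ[ℝ] (Fin n → ℝ) := LinearMap.funLeft ℝ ℝ i0.succAbove with hπ
  have hπapp : ∀ (x : Fin (n+1) → ℝ) (j : Fin n), π x j = x (i0.succAbove j) := fun x j => rfl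
  by_cases hb : ∃ b : Fin (n+1) → ℝ, b - a ∈ W ∧ b i0 = c
  · obtain ⟨b, hbW, hbc⟩ := hb
    set W' : Submodule ℝ (Fin n → ℝ) :=
      (W ⊓ LinearMap.ker (LinearMap.proj i0 : (Fin (n+1) → ℝ) →ₗ[ℝ] ℝ)).map π with hW'
    rcases ih W' (fun j => b (i0.succAbove j)) (fun j => J (i0.succAbove j))
        (fun j => hne _) (fun j => hconn _) with ⟨x', hx'W, hx'I⟩ | ⟨v', hv'W, hv'pos⟩
    · -- lift primal solution
      rw [Submodule.mem_map] at hx'W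
      obtain ⟨u, hu, hπu⟩ := hx'W
      obtain ⟨huW, huk⟩ := Submodule.mem_inf.1 hu
      have hui0 : u i0 = 0 := huk
      left
      refine ⟨b + u, ?_, ?_⟩
      · have h : b + u - a = (b - a) + u := by abel
        rw [h]; exact W.add_mem hbW huW
      · intro i
        refine Fin.succAboveCases i0 ?_ ?_ i
        · show b i0 + u i0 ∈ J i0
          rw [hJ0, hui0, add_zero, hbc]; exact rfl
        · intro j
          show b (i0.succAbove j) + u (i0.succAbove j) ∈ J (i0.succAbove j)
          have h1 : u (i0.succAbove j) = x' j - b (i0.succAbove j) := by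
            have := congrFun hπu j
            rw [hπapp] at this
            simpa using this
          rw [h1, add_sub_cancel]
          exact hx'I j
    · -- lift dual certificate
      right
      have key : ∃ s : ℝ, ∀ w ∈ W, ∑ i, (Fin.insertNth i0 s v' : Fin (n+1) → ℝ) i * w i = 0 := by
        by_cases hw0 : ∃ w ∈ W, w i0 ≠ 0
        · obtain ⟨w0, hw0W, hw0ne⟩ := hw0
          refine ⟨-(∑ j, v' j * w0 (i0.succAbove j)) / w0 i0, ?_⟩
          intro w hw
          set t : ℝ := w i0 / w0 i0 with ht
          have hw1 : w - t • w0 ∈ W ⊓ LinearMap.ker (LinearMap.proj i0 :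
              (Fin (n+1) → ℝ) →ₗ[ℝ] ℝ) := by
            refine Submodule.mem_inf.2 ⟨W.sub_mem hw (W.smul_mem _ hw0W), ?_⟩
            show (w - t • w0) i0 = 0
            simp only [Pi.sub_apply, Pi.smul_apply, smul_eq_mul, ht]
            field_simp
            ring
          have h0 : ∑ j, v' j * (w - t • w0) (i0.succAbove j) = 0 :=
            hv'W (π (w - t • w0)) (Submodule.mem_map.2 ⟨_, hw1, rfl⟩)
          have hexp : ∑ j, v' j * w (i0.succAbove j)
              = t * ∑ j, v' j * w0 (i0.succAbove j) := by
            have h2 : ∑ j, v' j * (w - t • w0) (i0.succAbove j)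
                = ∑ j, v' j * w (i0.succAbove j) - t * ∑ j, v' j * w0 (i0.succAbove j) := by
              rw [Finset.mul_sum, ← Finset.sum_sub_distrib]
              exact Finset.sum_congr rfl fun j _ => by
                simp only [Pi.sub_apply, Pi.smul_apply, smul_eq_mul]; ring
            rw [h2] at h0; linarith
          rw [Fin.sum_univ_succAbove (fun i => (Fin.insertNth i0
            (-(∑ j, v' j * w0 (i0.succAbove j)) / w0 i0) v' : Fin (n+1) → ℝ) i * w i) i0]
          simp only [Fin.insertNth_apply_same, Fin.insertNth_apply_succAbove]
          rw [hexp, ht]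
          field_simp
          ring
        · push_neg at hw0
          refine ⟨0, ?_⟩
          intro w hw
          have h0 : ∑ j, v' j * w (i0.succAbove j) = 0 := by
            refine hv'W (π w) (Submodule.mem_map.2 ⟨w, Submodule.mem_inf.2 ⟨hw, ?_⟩, rfl⟩)
            show w i0 = 0
            exact hw0 w hw
          rw [Fin.sum_univ_succAbove (fun i => (Fin.insertNth i0 0 v' : Fin (n+1) → ℝ) i * w i) i0]
          simp only [Fin.insertNth_apply_same, Fin.insertNth_apply_succAbove]
          rw [h0]; ring
      obtain ⟨s, hsW⟩ := key
      refine ⟨(Fin.insertNth i0 s v' : Fin (n+1) → ℝ), hsW, ?_⟩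
      intro z hz
      have hz0 : z i0 = c := by
        have := hz i0; rw [hJ0] at this; exact this
      have hb' : ∑ i, (Fin.insertNth i0 s v' : Fin (n+1) → ℝ) i * b i
          = ∑ i, (Fin.insertNth i0 s v' : Fin (n+1) → ℝ) i * a i := by
        have hdiff : ∑ i, (Fin.insertNth i0 s v' : Fin (n+1) → ℝ) i * (b - a) i = 0 := hsW _ hbW
        have h2 : ∑ i, (Fin.insertNth i0 s v' : Fin (n+1) → ℝ) i * (b - a) i
            = ∑ i, (Fin.insertNth i0 s v' : Fin (n+1) → ℝ) i * b i
              - ∑ i, (Fin.insertNth i0 s v' : Fin (n+1) → ℝ) i * a i := by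
          rw [← Finset.sum_sub_distrib]
          exact Finset.sum_congr rfl fun i _ => by simp only [Pi.sub_apply]; ring
        rw [h2] at hdiff; linarith
      have h1 : ∑ i, (Fin.insertNth i0 s v' : Fin (n+1) → ℝ) i * z i
          = s * c + ∑ j, v' j * z (i0.succAbove j) := by
        rw [Fin.sum_univ_succAbove (fun i => (Fin.insertNth i0 s v' : Fin (n+1) → ℝ) i * z i) i0]
        simp only [Fin.insertNth_apply_same, Fin.insertNth_apply_succAbove, hz0]
      have h2 : ∑ i, (Fin.insertNth i0 s v' : Fin (n+1) → ℝ) i * b i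
          = s * c + ∑ j, v' j * b (i0.succAbove j) := by
        rw [Fin.sum_univ_succAbove (fun i => (Fin.insertNth i0 s v' : Fin (n+1) → ℝ) i * b i) i0]
        simp only [Fin.insertNth_apply_same, Fin.insertNth_apply_succAbove, hbc]
      have h3 : ∑ j, v' j * b (i0.succAbove j) < ∑ j, v' j * z (i0.succAbove j) :=
        hv'pos (fun j => z (i0.succAbove j)) (fun j => hz _)
      rw [← hb', h1, h2]
      linarith
  · -- coordinate i0 cannot reach c on the flat: use ±e_{i0}
    push_neg at hb
    have hWi0 : ∀ w ∈ W, w i0 = 0 := by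
      intro w hw
      by_contra hwne
      refine hb (a + ((c - a i0)/(w i0)) • w) ?_ ?_
      · rw [add_sub_cancel_left]; exact W.smul_mem _ hw
      · show a i0 + ((c - a i0)/(w i0)) * w i0 = c
        field_simp
        ring
    have hane : a i0 ≠ c := fun h => hb a (by rw [sub_self]; exact W.zero_mem) h
    right
    set σ : ℝ := if a i0 < c then 1 else -1 with hσ
    have hsum : ∀ x : Fin (n+1) → ℝ,
        ∑ i, (if i = i0 then σ else 0) * x i = σ * x i0 := by
      intro x
      rw [Finset.sum_eq_single i0 (fun i _ hi => by rw [if_neg hi, zero_mul])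
        (fun h => absurd (Finset.mem_univ i0) h)]
      rw [if_pos rfl]
    refine ⟨fun i => if i = i0 then σ else 0, ?_, ?_⟩
    · intro w hw
      rw [hsum, hWi0 w hw, mul_zero]
    · intro z hz
      have hz0 : z i0 = c := by
        have := hz i0; rw [hJ0] at this; exact this
      rw [hsum, hsum, hz0]
      rcases lt_or_gt_of_ne hane with h | h
      · rw [hσ, if_pos h]; linarith
      · rw [hσ, if_neg (not_lt.2 (le_of_lt h))]; linarith

private lemma minty_affine : ∀ (n : ℕ) (W : Submodule ℝ (Fin n → ℝ)) (a : Fin n → ℝ)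
    (I : Fin n → Set ℝ), (∀ i, (I i).Nonempty) → (∀ i, (I i).OrdConnected) →
    (∃ x : Fin n → ℝ, x - a ∈ W ∧ ∀ i, x i ∈ I i) ∨
    (∃ v : Fin n → ℝ, (∀ w ∈ W, ∑ i, v i * w i = 0) ∧
      ∀ z : Fin n → ℝ, (∀ i, z i ∈ I i) → ∑ i, v i * a i < ∑ i, v i * z i) := by
  intro n
  induction n with
  | zero =>
    intro W a I hne hconn
    exact Or.inl ⟨a, by rw [sub_self]; exact W.zero_mem, fun i => i.elim0⟩
  | succ n ih =>
    intro W a I hne hconn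
    classical
    by_cases hx : ∃ x : Fin (n+1) → ℝ, x - a ∈ W ∧ ∀ i, x i ∈ I i
    · exact Or.inl hx
    right
    obtain ⟨v, hv1, hvW, hvge⟩ := weak_cert W a I hne hconn hx
    by_cases hstrict : ∀ z : Fin (n+1) → ℝ, (∀ i, z i ∈ I i) →
        ∑ i, v i * a i < ∑ i, v i * z i
    · exact ⟨v, hvW, hstrict⟩
    push_neg at hstrict
    obtain ⟨zs, hzsI, hle⟩ := hstrict
    have heq : ∑ i, v i * zs i = ∑ i, v i * a i := le_antisymm hle (hvge zs hzsI)
    -- minimizer property of zs in each coordinate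
    have hmin : ∀ (i : Fin (n+1)) (y : ℝ), y ∈ I i → v i * zs i ≤ v i * y := by
      intro i y hy
      have hupd : ∀ j, Function.update zs i y j ∈ I j := by
        intro j
        by_cases hji : j = i
        · subst hji; rw [Function.update_self]; exact hy
        · rw [Function.update_of_ne hji]; exact hzsI j
      have hge := hvge _ hupd
      have hfun : (fun j => v j * Function.update zs i y j)
          = Function.update (fun j => v j * zs j) i (v i * y) := by
        funext j
        by_cases hji : j = i
        · subst hji; rw [Function.update_self, Function.update_self]
        · rw [Function.update_of_ne hji, Function.update_of_ne hji]
      have hsum : ∑ j, v j * Function.update zs i y j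
          = v i * y + ∑ j ∈ Finset.univ.erase i, v j * zs j := by
        calc ∑ j, v j * Function.update zs i y j
            = ∑ j, Function.update (fun j => v j * zs j) i (v i * y) j := by
              exact Finset.sum_congr rfl fun j _ => congrFun hfun j
          _ = v i * y + ∑ j ∈ Finset.univ \ {i}, v j * zs j :=
              Finset.sum_update_of_mem (Finset.mem_univ i) _ _
          _ = v i * y + ∑ j ∈ Finset.univ.erase i, v j * zs j := by
              rw [Finset.sdiff_singleton_eq_erase]
      have hsum2 : ∑ j, v j * zs j
          = v i * zs i + ∑ j ∈ Finset.univ.erase i, v j * zs j :=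
        (Finset.add_sum_erase _ _ (Finset.mem_univ i)).symm
      rw [hsum] at hge
      rw [hsum2] at heq
      linarith
    have hvne : v ≠ 0 := by
      intro h
      rw [h, norm_zero] at hv1
      exact one_ne_zero hv1.symm
    obtain ⟨i0, hi0⟩ : ∃ i, v i ≠ 0 := by
      by_contra h
      push_neg at h
      exact hvne (funext h)
    set J : Fin (n+1) → Set ℝ := fun i => if v i = 0 then I i else {zs i} with hJ
    have hJsub : ∀ i, J i ⊆ I i := by
      intro i
      simp only [hJ]
      by_cases h : v i = 0
      · rw [if_pos h]
      · rw [if_neg h]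
        exact Set.singleton_subset_iff.2 (hzsI i)
    have hJne : ∀ i, (J i).Nonempty := by
      intro i; simp only [hJ]
      by_cases h : v i = 0
      · rw [if_pos h]; exact hne i
      · rw [if_neg h]; exact Set.singleton_nonempty _
    have hJconn : ∀ i, (J i).OrdConnected := by
      intro i; simp only [hJ]
      by_cases h : v i = 0
      · rw [if_pos h]; exact hconn i
      · rw [if_neg h]; exact Set.ordConnected_singleton
    have hJ0 : J i0 = {zs i0} := by simp only [hJ]; exact if_neg hi0
    rcases elim_coord ih W a J hJne hJconn i0 (zs i0) hJ0 with ⟨x, h1, h2⟩ | ⟨v'', hv''W, hv''pos⟩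
    · exact absurd ⟨x, h1, fun i => hJsub i (h2 i)⟩ hx
    -- combine v'' and v
    set M : ℝ := ∑ i, if v i = 0 then 0 else |v'' i| / |v i| with hM
    have hM0 : 0 ≤ M := Finset.sum_nonneg fun i _ => by
      show (0:ℝ) ≤ if v i = 0 then 0 else |v'' i| / |v i|
      by_cases h : v i = 0
      · rw [if_pos h]
      · rw [if_neg h]; positivity
    have hMi : ∀ i, v i ≠ 0 → |v'' i| ≤ M * |v i| := by
      intro i h
      have habs : 0 < |v i| := abs_pos.2 h
      have h1 : |v'' i| / |v i| ≤ M := by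
        have hterm : ∀ j ∈ Finset.univ, (0:ℝ) ≤ if v j = 0 then 0 else |v'' j| / |v j| := by
          intro j _
          by_cases h' : v j = 0
          · rw [if_pos h']
          · rw [if_neg h']; positivity
        have h2 := Finset.single_le_sum
          (f := fun j => if v j = 0 then (0:ℝ) else |v'' j| / |v j|) hterm (Finset.mem_univ i)
        simp only [if_neg h] at h2
        rw [hM]
        exact h2
      calc |v'' i| = (|v'' i| / |v i|) * |v i| := by field_simp
        _ ≤ M * |v i| := mul_le_mul_of_nonneg_right h1 (le_of_lt habs)
    have hsplit : ∀ x : Fin (n+1) → ℝ,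
        ∑ i, (v'' i + M * v i) * x i = ∑ i, v'' i * x i + M * ∑ i, v i * x i := by
      intro x
      rw [Finset.mul_sum, ← Finset.sum_add_distrib]
      exact Finset.sum_congr rfl fun i _ => by ring
    refine ⟨fun i => v'' i + M * v i, ?_, ?_⟩
    · intro w hw
      rw [hsplit, hvW w hw, hv''W w hw]
      ring
    · intro z hz
      set zt : Fin (n+1) → ℝ := fun i => if v i = 0 then z i else zs i with hzt
      have hztJ : ∀ i, zt i ∈ J i := by
        intro i
        simp only [hzt, hJ]
        by_cases h : v i = 0
        · rw [if_pos h, if_pos h]; exact hz i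
        · rw [if_neg h, if_neg h]; exact Set.mem_singleton _
      have hpos : ∑ i, v'' i * a i < ∑ i, v'' i * zt i := hv''pos zt hztJ
      have hvzt : ∑ i, v i * zt i = ∑ i, v i * a i := by
        rw [← heq]
        refine Finset.sum_congr rfl fun i _ => ?_
        by_cases h : v i = 0
        · rw [h]; ring
        · rw [hzt]; simp only [if_neg h]
      have hterm : ∀ i, (v'' i + M * v i) * zt i ≤ (v'' i + M * v i) * z i := by
        intro i
        by_cases h : v i = 0
        · simp only [hzt, if_pos h]; exact le_rfl
        · have hzti : zt i = zs i := by simp only [hzt, if_neg h]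
          rw [hzti]
          have hmini := hmin i (z i) (hz i)
          have habs := hMi i h
          rcases lt_or_gt_of_ne h with hneg | hpos'
          · -- v i < 0 : z i ≤ zs i, coefficient ≤ 0
            have hzle : z i ≤ zs i := by nlinarith
            have hcoef : v'' i + M * v i ≤ 0 := by
              have : |v i| = -v i := abs_of_neg hneg
              have h2 : v'' i ≤ |v'' i| := le_abs_self _
              nlinarith
            nlinarith
          · -- v i > 0 : zs i ≤ z i, coefficient ≥ 0
            have hzle : zs i ≤ z i := by nlinarith
            have hcoef : 0 ≤ v'' i + M * v i := by
              have : |v i| = v i := abs_of_pos hpos'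
              have h2 : -v'' i ≤ |v'' i| := neg_le_abs _
              nlinarith
            nlinarith
      have hsumle : ∑ i, (v'' i + M * v i) * zt i ≤ ∑ i, (v'' i + M * v i) * z i :=
        Finset.sum_le_sum fun i _ => hterm i
      rw [hsplit a]
      rw [hsplit zt, hvzt] at hsumle
      linarith

theorem minty_lemma {n : ℕ} (V : Submodule ℝ (Fin n → ℝ)) (I : Fin n → Set ℝ)
    (hne : ∀ i, (I i).Nonempty) (hconn : ∀ i, (I i).OrdConnected) :
    Xor' (∃ x ∈ V, ∀ i, x i ∈ I i)
      (∃ v : Fin n → ℝ, (∀ x ∈ V, ∑ i, v i * x i = 0) ∧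
        ∀ z : Fin n → ℝ, (∀ i, z i ∈ I i) → 0 < ∑ i, v i * z i) := by
  have hincompat : ¬ ((∃ x ∈ V, ∀ i, x i ∈ I i) ∧
      (∃ v : Fin n → ℝ, (∀ x ∈ V, ∑ i, v i * x i = 0) ∧
        ∀ z : Fin n → ℝ, (∀ i, z i ∈ I i) → 0 < ∑ i, v i * z i)) := by
    rintro ⟨⟨x, hxV, hxI⟩, ⟨v, hvW, hvpos⟩⟩
    have h1 := hvpos x hxI
    rw [hvW x hxV] at h1
    exact lt_irrefl _ h1
  rcases minty_affine n V 0 I hne hconn with ⟨x, hxV, hxI⟩ | ⟨v, hvW, hvpos⟩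
  · rw [sub_zero] at hxV
    exact Or.inl ⟨⟨x, hxV, hxI⟩, fun hr => hincompat ⟨⟨x, hxV, hxI⟩, hr⟩⟩
  · have hpos : ∀ z : Fin n → ℝ, (∀ i, z i ∈ I i) → 0 < ∑ i, v i * z i := by
      intro z hz
      have := hvpos z hz
      simpa using this
    exact Or.inr ⟨⟨v, hvW, hpos⟩, fun hl => hincompat ⟨hl, ⟨v, hvW, hpos⟩⟩⟩
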